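/- Let H be a Hilbert space and g a weak Riemannian metric on H given by g_x(e,f) = ⟨A_x e, f⟩ where A_x = ‖x-a‖² Id + S as above. The associated map g_x♭ : H → H* is surjective if and only if x ≠ a; consequently the weak symplectic form ω on TH = H × H defined via the block operator ω♭_{(x,e)} = ½ [[Γ_{(x,e)}, -g_x♭],[g_x♭, 0]] (for any bounded operator Γ_{(x,e)}) is strongly non-degenerate at (x,e) if and only if x ≠ a. -/

import Mathlib

open scoped RealInnerProductSpace

lemma auxA {H : Type*} [NormedAddCommGroup H] [InnerProductSpace ℝ H] [CompleteSpace H]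
    (S : H →L[ℝ] H)
    (hpos : ∀ u : H, u ≠ 0 → 0 < ⟪S u, u⟫)
    {c : ℝ} (hc : 0 < c) :
    Function.Bijective fun e : H => c • e + S e := by
  set A : H →L[ℝ] H := c • ContinuousLinearMap.id ℝ H + S with hA
  have hAapp : ∀ e, A e = c • e + S e := fun e => rfl
  have hSnn : ∀ u : H, 0 ≤ ⟪S u, u⟫ := by
    intro u
    rcases eq_or_ne u 0 with h | h
    · simp [h]
    · exact (hpos u h).le
  have hcoer : ∀ u : H, c * ‖u‖ ^ 2 ≤ ⟪A u, u⟫ := by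
    intro u
    have : ⟪A u, u⟫ = c * ‖u‖ ^ 2 + ⟪S u, u⟫ := by
      rw [hAapp, inner_add_left, real_inner_smul_left, real_inner_self_eq_norm_sq]
    rw [this]
    linarith [hSnn u]
  have hbound : ∀ u : H, ‖u‖ ≤ (⟨c, hc.le⟩ : NNReal)⁻¹ * ‖A u‖ := by
    intro u
    have h1 : c * ‖u‖ ^ 2 ≤ ‖A u‖ * ‖u‖ := (hcoer u).trans (real_inner_le_norm _ _)
    rcases eq_or_ne u 0 with h | h
    · simp [h]
    · have hu : 0 < ‖u‖ := norm_pos_iff.2 h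
      have : c * ‖u‖ ≤ ‖A u‖ := by
        nlinarith
      push_cast
      rw [inv_mul_eq_div, le_div_iff₀ hc]
      linarith
  have hanti : AntilipschitzWith _ A := A.antilipschitz_of_bound hbound
  have hdense : A.range.topologicalClosure = ⊤ := by
      rw [Submodule.topologicalClosure_eq_top_iff, Submodule.eq_bot_iff]
      intro v hv
      by_contra hv0
      have h1 : ⟪A v, v⟫ = 0 := hv (A v) (LinearMap.mem_range_self _ v)
      have h2 : 0 < c * ‖v‖ ^ 2 := by
        have := norm_pos_iff.2 hv0
        positivity
      linarith [hcoer v]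
  have := A.bijective_iff_dense_range_and_antilipschitz.2 ⟨hdense, ⟨_, hanti⟩⟩
  exact this

/-- With A_x = ‖x-a‖²·Id + S as above and g_x♭ : H → H* given by
e ↦ ⟪A_x e, ·⟫, the map g_x♭ is surjective iff x ≠ a; and for any bounded Γ the
block operator ½[[Γ, -g_x♭],[g_x♭, 0]] on H × H, viewed as a map into
H* × H*, is bijective (i.e. the associated weak symplectic form is strongly
non-degenerate at (x,e)) iff x ≠ a. -/
theorem stmt17 {H : Type*} [NormedAddCommGroup H] [InnerProductSpace ℝ H] [CompleteSpace H]
    (S : H →L[ℝ] H)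
    (hcpt : IsCompactOperator (⇑S))
    (hsa : ∀ u v : H, ⟪S u, v⟫ = ⟪u, S v⟫)
    (hpos : ∀ u : H, u ≠ 0 → 0 < ⟪S u, u⟫)
    (hdense : DenseRange (⇑S))
    (hproper : Set.range (⇑S) ≠ Set.univ)
    (a : H) :
    (∀ x : H,
      (Function.Surjective fun e : H =>
          InnerProductSpace.toDual ℝ H (‖x - a‖ ^ 2 • e + S e)) ↔ x ≠ a) ∧
      ∀ (Γ : H →L[ℝ] H) (x : H),
        (Function.Bijective fun p : H × H =>
            (((1 : ℝ) / 2) • (InnerProductSpace.toDual ℝ H (Γ p.1) -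
                InnerProductSpace.toDual ℝ H (‖x - a‖ ^ 2 • p.2 + S p.2)),
              ((1 : ℝ) / 2) • InnerProductSpace.toDual ℝ H (‖x - a‖ ^ 2 • p.1 + S p.1))) ↔
          x ≠ a := by
  set D := InnerProductSpace.toDual ℝ H with hD
  obtain ⟨w, hw⟩ : ∃ w : H, w ∉ Set.range ⇑S := by
    by_contra h
    push_neg at h
    exact hproper (Set.eq_univ_of_forall h)
  have key : ∀ x : H, x ≠ a → Function.Bijective fun e : H => ‖x - a‖ ^ 2 • e + S e := by
    intro x hx
    exact auxA S hpos (pow_pos (norm_pos_iff.2 (sub_ne_zero.2 hx)) 2)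
  constructor
  · intro x
    constructor
    · intro hsurj
      intro hxa
      obtain ⟨e, he⟩ := hsurj (D w)
      apply hw
      refine ⟨e, ?_⟩
      have := D.injective he
      rw [hxa, sub_self] at this
      simpa using this
    · intro hx
      exact D.surjective.comp (key x hx).surjective
  · intro Γ x
    constructor
    · intro hbij
      intro hxa
      obtain ⟨p, hp⟩ := hbij.surjective (0, ((1 : ℝ) / 2) • D w)
      have h2 := congrArg Prod.snd hp
      simp only at h2
      have h3 : D (‖x - a‖ ^ 2 • p.1 + S p.1) = D w :=
        smul_right_injective _ (by norm_num : (1 : ℝ) / 2 ≠ 0) h2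
      have := D.injective h3
      rw [hxa, sub_self] at this
      apply hw
      refine ⟨p.1, ?_⟩
      simpa using this
    · intro hx
      set A : H → H := fun e : H => ‖x - a‖ ^ 2 • e + S e with hA
      have hb := key x hx
      have hhalf : ((1 : ℝ) / 2) ≠ 0 := by norm_num
      constructor
      · intro p q h
        have h2 := congrArg Prod.snd h
        simp only at h2
        have h1eq : p.1 = q.1 :=
          hb.injective (D.injective (smul_right_injective _ hhalf h2))
        have h1 := congrArg Prod.fst h
        simp only at h1
        have h1' := smul_right_injective _ hhalf h1
        rw [h1eq] at h1'
        have : D (A p.2) = D (A q.2) := sub_right_inj.mp h1'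
        have h2eq : p.2 = q.2 := hb.injective (D.injective this)
        exact Prod.ext h1eq h2eq
      · rintro ⟨φ, ψ⟩
        obtain ⟨p1, hp1⟩ := hb.surjective (D.symm ((2 : ℝ) • ψ))
        obtain ⟨p2, hp2⟩ := hb.surjective (D.symm (D (Γ p1) - (2 : ℝ) • φ))
        refine ⟨(p1, p2), ?_⟩
        have e1 : D (A p1) = (2 : ℝ) • ψ := by
          show D ((fun e : H => ‖x - a‖ ^ 2 • e + S e) p1) = _
          rw [hp1, D.apply_symm_apply]
        have e2 : D (A p2) = D (Γ p1) - (2 : ℝ) • φ := by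
          show D ((fun e : H => ‖x - a‖ ^ 2 • e + S e) p2) = _
          rw [hp2, D.apply_symm_apply]
        show (((1 : ℝ) / 2) • (D (Γ p1) - D (A p2)), ((1 : ℝ) / 2) • D (A p1)) = (φ, ψ)
        rw [e1, e2, sub_sub_cancel, smul_smul, smul_smul]
        norm_num
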